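/- There exists a strictly increasing function f : ℝ → ℝ such that f'(x) = 2^x for every rational x and f'(x) = 0 for Lebesgue-almost every irrational x. -/

import Mathlib

open MeasureTheory Set Filter Topology
open scoped Classical ENNReal

namespace Stmt8

noncomputable def e : ℕ ≃ ℚ := (Denumerable.eqv ℚ).symm

noncomputable def q (n : ℕ) : ℝ := ((e n : ℚ) : ℝ)

lemma q_injective : Function.Injective q := by
  intro a b h
  exact e.injective (Rat.cast_injective h)

lemma q_surjective (r : ℚ) : ∃ n, q n = (r : ℝ) := by
  refine ⟨e.symm r, ?_⟩
  rw [q, e.apply_symm_apply]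

lemma q_rat (n : ℕ) : ∃ r : ℚ, q n = (r : ℝ) := ⟨_, rfl⟩

noncomputable def c (n : ℕ) : ℝ := (2 : ℝ) ^ (q n)

lemma c_pos (n : ℕ) : 0 < c n := Real.rpow_pos_of_pos two_pos _

lemma exists_t (n : ℕ) : ∃ t : ℝ, Irrational t ∧ 0 < t ∧
    2 * c n * t ≤ (2 : ℝ)⁻¹ ^ n ∧
    ∀ m < n, 2 * t ≤ |q n - q m| ∧ 2 * c n * t ≤ (4 : ℝ)⁻¹ ^ n * |q n - q m| := by
  set base : ℝ := (2 : ℝ)⁻¹ ^ n / (2 * c n) with hbase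
  have hbasepos : 0 < base := by
    have h2c : 0 < 2 * c n := by linarith [c_pos n]
    exact div_pos (pow_pos (by norm_num) n) h2c
  set f : ℕ → ℝ := fun m => min (|q n - q m| / 2)
      ((4 : ℝ)⁻¹ ^ n * |q n - q m| / (2 * c n)) with hf
  have hfpos : ∀ m < n, 0 < f m := by
    intro m hm
    have hne : q n ≠ q m := fun h => (Nat.ne_of_gt hm) (q_injective h)
    have habs : 0 < |q n - q m| := abs_pos.2 (sub_ne_zero.2 hne)
    have := c_pos n
    exact lt_min (by positivity) (by positivity)
  set B : ℝ := if h : (Finset.range n).Nonempty then min base ((Finset.range n).inf' h f) else base with hB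
  have hBpos : 0 < B := by
    rw [hB]
    split_ifs with h
    · refine lt_min hbasepos ?_
      rw [Finset.lt_inf'_iff]
      intro m hm
      exact hfpos m (Finset.mem_range.1 hm)
    · exact hbasepos
  obtain ⟨t, hirr, ht0, htB⟩ := exists_irrational_btwn hBpos
  have hle : ∀ m < n, t ≤ f m := by
    intro m hm
    have h1 : (Finset.range n).Nonempty := ⟨m, Finset.mem_range.2 hm⟩
    have := htB.le
    rw [hB, dif_pos h1] at this
    exact this.trans ((min_le_right _ _).trans (Finset.inf'_le f (Finset.mem_range.2 hm)))
  have hlebase : t ≤ base := by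
    have := htB.le
    rw [hB] at this
    split_ifs at this with h
    · exact this.trans (min_le_left _ _)
    · exact this
  refine ⟨t, hirr, ht0, ?_, ?_⟩
  · have := c_pos n
    calc 2 * c n * t ≤ 2 * c n * base := by nlinarith
    _ = (2:ℝ)⁻¹ ^ n := by rw [hbase]; field_simp
  · intro m hm
    have h1 := (hle m hm).trans (min_le_left _ _)
    have h2 := (hle m hm).trans (min_le_right _ _)
    have := c_pos n
    constructor
    · nlinarith
    · calc 2 * c n * t ≤ 2 * c n * ((4 : ℝ)⁻¹ ^ n * |q n - q m| / (2 * c n)) := by nlinarith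
      _ = (4 : ℝ)⁻¹ ^ n * |q n - q m| := by field_simp

noncomputable def t (n : ℕ) : ℝ := (exists_t n).choose

lemma t_irrational (n : ℕ) : Irrational (t n) := (exists_t n).choose_spec.1
lemma t_pos (n : ℕ) : 0 < t n := (exists_t n).choose_spec.2.1
lemma t_mass (n : ℕ) : 2 * c n * t n ≤ (2 : ℝ)⁻¹ ^ n := (exists_t n).choose_spec.2.2.1
lemma t_sep {m n : ℕ} (h : m < n) : 2 * t n ≤ |q n - q m| :=
  ((exists_t n).choose_spec.2.2.2 m h).1
lemma t_mass_sep {m n : ℕ} (h : m < n) : 2 * c n * t n ≤ (4 : ℝ)⁻¹ ^ n * |q n - q m| :=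
  ((exists_t n).choose_spec.2.2.2 m h).2


noncomputable def a (n j : ℕ) : ℝ := t n / (j + 1)

lemma a_pos (n j : ℕ) : 0 < a n j := div_pos (t_pos n) (by positivity)

lemma a_succ_lt (n j : ℕ) : a n (j + 1) < a n j := by
  apply div_lt_div_of_pos_left (t_pos n) (by positivity)
  push_cast; linarith

lemma a_antitone (n : ℕ) : Antitone (a n) := by
  apply antitone_nat_of_succ_le
  intro j; exact (a_succ_lt n j).le

lemma a_zero (n : ℕ) : a n 0 = t n := by simp [a]

lemma a_le_t (n j : ℕ) : a n j ≤ t n := by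
  rw [← a_zero n]; exact a_antitone n (Nat.zero_le j)

lemma a_tendsto (n : ℕ) : Tendsto (a n) atTop (𝓝 0) := by
  have : Tendsto (fun j : ℕ => ((j : ℝ) + 1)) atTop atTop := by
    apply tendsto_atTop_add_const_right
    exact tendsto_natCast_atTop_atTop
  exact (Tendsto.div_atTop tendsto_const_nhds this : Tendsto (fun j : ℕ => t n / ((j:ℝ)+1)) atTop (𝓝 0))

lemma a_irrational (n j : ℕ) : Irrational (a n j) := by
  have : a n j = t n / ((j + 1 : ℕ) : ℝ) := by rw [a]; push_cast; ring_nf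
  rw [this]
  exact (t_irrational n).div_natCast (Nat.succ_ne_zero j)

noncomputable def P : ℕ × ℕ × Bool → ℝ :=
  fun p => q p.1 + (cond p.2.2 1 (-1)) * a p.1 p.2.1

noncomputable def w : ℕ × ℕ × Bool → ℝ := fun p => c p.1 * (a p.1 p.2.1 - a p.1 (p.2.1 + 1))

lemma w_pos (p : ℕ × ℕ × Bool) : 0 < w p :=
  mul_pos (c_pos p.1) (sub_pos.2 (a_succ_lt p.1 p.2.1))

lemma w_nonneg (p : ℕ × ℕ × Bool) : 0 ≤ w p := (w_pos p).le

lemma P_irrational (p : ℕ × ℕ × Bool) : Irrational (P p) := by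
  obtain ⟨r, hr⟩ := q_rat p.1
  rw [P, hr]
  have h1 : Irrational ((cond p.2.2 1 (-1)) * a p.1 p.2.1) := by
    cases p.2.2
    · simpa using (a_irrational p.1 p.2.1).neg
    · simpa using a_irrational p.1 p.2.1
  exact h1.ratCast_add r

lemma P_ne_rat (p : ℕ × ℕ × Bool) (r : ℚ) : P p ≠ (r : ℝ) := (P_irrational p).ne_rat r

lemma P_dist (p : ℕ × ℕ × Bool) : |P p - q p.1| = a p.1 p.2.1 := by
  rw [P]
  cases p.2.2 <;> simp [abs_of_pos (a_pos p.1 p.2.1), abs_of_nonpos (neg_nonpos.2 (a_pos p.1 p.2.1).le)]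

noncomputable def μ : Measure ℝ :=
  Measure.sum fun p : ℕ × ℕ × Bool => (ENNReal.ofReal (w p)) • Measure.dirac (P p)

lemma μ_apply (s : Set ℝ) :
    μ s = ∑' p : ℕ × ℕ × Bool, if P p ∈ s then ENNReal.ofReal (w p) else 0 := by
  rw [μ, Measure.sum_apply_of_countable]
  congr 1
  ext p
  rw [Measure.smul_apply, Measure.dirac_apply, smul_eq_mul, Set.indicator_apply]
  split_ifs <;> simp

noncomputable def S (n : ℕ) (I : Set ℝ) : ℝ≥0∞ :=
  ∑' (js : ℕ × Bool), if P (n, js) ∈ I then ENNReal.ofReal (w (n, js)) else 0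

lemma μ_eq_tsum_S (s : Set ℝ) : μ s = ∑' n, S n s := by
  rw [μ_apply]
  exact ENNReal.tsum_prod'

lemma S_eq (n : ℕ) (I : Set ℝ) :
    S n I = (∑' j : ℕ, if P (n, j, false) ∈ I then ENNReal.ofReal (w (n, j, false)) else 0)
      + (∑' j : ℕ, if P (n, j, true) ∈ I then ENNReal.ofReal (w (n, j, true)) else 0) := by
  rw [S, ENNReal.tsum_prod']
  simp_rw [tsum_bool]
  rw [ENNReal.tsum_add]

lemma hasSum_tele (n k : ℕ) :
    HasSum (fun j => c n * (a n (j + k) - a n (j + k + 1))) (c n * a n k) := by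
  rw [hasSum_iff_tendsto_nat_of_nonneg]
  · have h1 : ∀ m : ℕ, ∑ j ∈ Finset.range m, c n * (a n (j + k) - a n (j + k + 1))
        = c n * (a n k - a n (m + k)) := by
      intro m
      rw [← Finset.mul_sum]
      congr 1
      have h0 := Finset.sum_range_sub' (fun j => a n (j + k)) m
      simp only [zero_add] at h0
      rw [← h0]
      apply Finset.sum_congr rfl
      intro j _
      congr 2
      omega
    simp only [h1]
    have h2 : Tendsto (fun m : ℕ => a n (m + k)) atTop (𝓝 0) :=
      (a_tendsto n).comp (tendsto_add_atTop_nat k)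
    have := (tendsto_const_nhds (x := a n k) (f := atTop (α := ℕ))).sub h2
    rw [sub_zero] at this
    simpa using (tendsto_const_nhds (x := c n) (f := atTop (α := ℕ))).mul this
  · intro j
    have := (a_antitone n) (le_of_lt (Nat.lt_succ_self (j + k)))
    have := c_pos n
    nlinarith [a_succ_lt n (j + k)]

lemma tail_sum (n j₀ : ℕ) :
    (∑' j : ℕ, if j₀ ≤ j then ENNReal.ofReal (c n * (a n j - a n (j + 1))) else 0)
      = ENNReal.ofReal (c n * a n j₀) := by
  have hinj : Function.Injective (fun j : ℕ => j + j₀) := add_left_injective j₀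
  have hsupp : Function.support (fun j : ℕ => if j₀ ≤ j then ENNReal.ofReal (c n * (a n j - a n (j + 1))) else 0) ⊆ Set.range (fun j : ℕ => j + j₀) := by
    intro j hj
    by_contra hmem
    have : ¬ j₀ ≤ j := by
      intro hle
      refine hmem ⟨j - j₀, ?_⟩
      simp only []
      omega
    simp [this] at hj
  rw [← hinj.tsum_eq hsupp]
  have heq : ∀ j : ℕ, (if j₀ ≤ j + j₀ then ENNReal.ofReal (c n * (a n (j + j₀) - a n (j + j₀ + 1))) else 0) = ENNReal.ofReal (c n * (a n (j + j₀) - a n (j + j₀ + 1))) := by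
    intro j; simp
  simp only [heq]
  rw [← ENNReal.ofReal_tsum_of_nonneg]
  · rw [(hasSum_tele n j₀).tsum_eq]
  · intro j
    have := c_pos n
    nlinarith [a_succ_lt n (j + j₀)]
  · exact (hasSum_tele n j₀).summable

lemma bound_aux {t h K : ℝ} (hh : 0 < h) (hth : h < t) (hK : 1 ≤ K)
    (hA : t ≤ h * (K + 1)) (hB : h * K ≤ t) : h - t / (K + 1) ≤ h * h / (t - h) := by
  have hK1 : (0:ℝ) < K + 1 := by linarith
  have hth' : (0:ℝ) < t - h := by linarith
  have key : (h - t / (K + 1)) * (t - h) ≤ h * h := by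
    have e : h - t / (K + 1) = (h * (K + 1) - t) / (K + 1) := by field_simp
    rw [e, div_mul_eq_mul_div, div_le_iff₀ hK1]
    have f1 : h * (K + 1) - t ≤ h := by linarith
    have f2 : t - h ≤ h * K := by nlinarith
    nlinarith [mul_le_mul f1 f2 (by linarith) hh.le]
  exact (le_div_iff₀ hth').2 key

lemma S_right (m : ℕ) {h : ℝ} (hh : 0 < h) (hht : h < t m) :
    ∃ u : ℝ, 0 ≤ u ∧ u ≤ h ∧ h - u ≤ h * h / (t m - h) ∧
      S m (Ioc (q m) (q m + h)) = ENNReal.ofReal (c m * u) := by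
  have hex : ∃ j : ℕ, a m j ≤ h := by
    obtain ⟨k, hk⟩ := exists_nat_gt (t m / h)
    refine ⟨k, ?_⟩
    rw [a, div_le_iff₀ (by positivity)]
    rw [div_lt_iff₀ hh] at hk
    nlinarith
  set j₀ := Nat.find hex with hj₀
  have hu : a m j₀ ≤ h := Nat.find_spec hex
  have hj₀pos : 1 ≤ j₀ := by
    rcases Nat.eq_zero_or_pos j₀ with h0 | h1
    · exfalso
      have := hu
      rw [h0, a_zero] at this
      linarith
    · exact h1
  have hmin : ¬ a m (j₀ - 1) ≤ h := Nat.find_min hex (by omega)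
  refine ⟨a m j₀, (a_pos m j₀).le, hu, ?_, ?_⟩
  · -- arithmetic bound
    have hB : h * (j₀ : ℝ) ≤ t m := by
      have : h < a m (j₀ - 1) := not_le.1 hmin
      rw [a] at this
      have hcast : ((j₀ - 1 : ℕ) : ℝ) + 1 = (j₀ : ℝ) := by
        have : (1:ℕ) ≤ j₀ := hj₀pos
        push_cast [Nat.cast_sub this]
        ring
      rw [hcast] at this
      rw [lt_div_iff₀ (by exact_mod_cast hj₀pos : (0:ℝ) < (j₀:ℝ))] at this
      linarith [this]
    have hA : t m ≤ h * ((j₀ : ℝ) + 1) := by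
      have := hu
      rw [a, div_le_iff₀ (by positivity)] at this
      linarith
    have : h - t m / ((j₀:ℝ) + 1) ≤ h * h / (t m - h) :=
      bound_aux hh hht (by exact_mod_cast hj₀pos) hA hB
    rw [a]
    exact this
  · rw [S_eq]
    have hfalse : ∀ j : ℕ, P (m, j, false) ∉ Ioc (q m) (q m + h) := by
      intro j hj
      have := hj.1
      rw [P] at this
      simp only [cond] at this
      nlinarith [a_pos m j]
    have htrue : ∀ j : ℕ, (P (m, j, true) ∈ Ioc (q m) (q m + h)) ↔ j₀ ≤ j := by
      intro j
      rw [P]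
      simp only [cond, one_mul, Set.mem_Ioc]
      constructor
      · rintro ⟨-, h2⟩
        exact Nat.find_min' hex (by linarith)
      · intro hj
        have h1 : a m j ≤ a m j₀ := a_antitone m hj
        exact ⟨by linarith [a_pos m j], by linarith⟩
    simp only [hfalse, htrue, if_false, tsum_zero, zero_add]
    have : ∀ j : ℕ, (if j₀ ≤ j then ENNReal.ofReal (w (m, j, true)) else 0)
        = (if j₀ ≤ j then ENNReal.ofReal (c m * (a m j - a m (j + 1))) else 0) := by
      intro j; rw [w]
    simp only [this]
    exact tail_sum m j₀

lemma S_left (m : ℕ) {h : ℝ} (hh : 0 < h) (hht : h < t m) :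
    ∃ u : ℝ, 0 ≤ u ∧ u ≤ h ∧ h - u ≤ h * h / (t m - h) ∧
      S m (Ioc (q m - h) (q m)) = ENNReal.ofReal (c m * u) := by
  have hex : ∃ j : ℕ, a m j < h := by
    obtain ⟨k, hk⟩ := exists_nat_gt (t m / h)
    refine ⟨k, ?_⟩
    rw [a, div_lt_iff₀ (by positivity)]
    rw [div_lt_iff₀ hh] at hk
    nlinarith
  set j₀ := Nat.find hex with hj₀
  have hu : a m j₀ < h := Nat.find_spec hex
  have hj₀pos : 1 ≤ j₀ := by
    rcases Nat.eq_zero_or_pos j₀ with h0 | h1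
    · exfalso
      have := hu
      rw [h0, a_zero] at this
      linarith
    · exact h1
  have hmin : ¬ a m (j₀ - 1) < h := Nat.find_min hex (by omega)
  refine ⟨a m j₀, (a_pos m j₀).le, hu.le, ?_, ?_⟩
  · have hB : h * (j₀ : ℝ) ≤ t m := by
      have : h ≤ a m (j₀ - 1) := not_lt.1 hmin
      rw [a] at this
      have hcast : ((j₀ - 1 : ℕ) : ℝ) + 1 = (j₀ : ℝ) := by
        have : (1:ℕ) ≤ j₀ := hj₀pos
        push_cast [Nat.cast_sub this]
        ring
      rw [hcast] at this
      rw [le_div_iff₀ (by exact_mod_cast hj₀pos : (0:ℝ) < (j₀:ℝ))] at this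
      linarith [this]
    have hA : t m ≤ h * ((j₀ : ℝ) + 1) := by
      have := hu.le
      rw [a, div_le_iff₀ (by positivity)] at this
      linarith
    have : h - t m / ((j₀:ℝ) + 1) ≤ h * h / (t m - h) :=
      bound_aux hh hht (by exact_mod_cast hj₀pos) hA hB
    rw [a]
    exact this
  · rw [S_eq]
    have htrue : ∀ j : ℕ, P (m, j, true) ∉ Ioc (q m - h) (q m) := by
      intro j hj
      have := hj.2
      rw [P] at this
      simp only [cond, one_mul] at this
      nlinarith [a_pos m j]
    have hfalse : ∀ j : ℕ, (P (m, j, false) ∈ Ioc (q m - h) (q m)) ↔ j₀ ≤ j := by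
      intro j
      rw [P]
      simp only [cond, neg_one_mul, Set.mem_Ioc]
      constructor
      · rintro ⟨h1, -⟩
        refine Nat.find_min' hex (by linarith)
      · intro hj
        have h1 : a m j ≤ a m j₀ := a_antitone m hj
        constructor
        · linarith
        · linarith [a_pos m j]
    simp only [htrue, hfalse, if_false, tsum_zero, add_zero]
    have : ∀ j : ℕ, (if j₀ ≤ j then ENNReal.ofReal (w (m, j, false)) else 0)
        = (if j₀ ≤ j then ENNReal.ofReal (c m * (a m j - a m (j + 1))) else 0) := by
      intro j; rw [w]
    simp only [this]
    exact tail_sum m j₀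

lemma S_le_mass (n : ℕ) (I : Set ℝ) : S n I ≤ ENNReal.ofReal (2 * c n * t n) := by
  rw [S_eq]
  have hb : ∀ b : Bool, (∑' j : ℕ, if P (n, j, b) ∈ I then ENNReal.ofReal (w (n, j, b)) else 0)
      ≤ ENNReal.ofReal (c n * t n) := by
    intro b
    have h1 : (∑' j : ℕ, if P (n, j, b) ∈ I then ENNReal.ofReal (w (n, j, b)) else 0)
        ≤ ∑' j : ℕ, if 0 ≤ j then ENNReal.ofReal (c n * (a n j - a n (j + 1))) else 0 := by
      apply ENNReal.tsum_le_tsum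
      intro j
      simp only [Nat.zero_le, if_true]
      split_ifs
      · rw [w]
      · exact zero_le
    calc _ ≤ _ := h1
    _ = ENNReal.ofReal (c n * a n 0) := tail_sum n 0
    _ = ENNReal.ofReal (c n * t n) := by rw [a_zero]
  calc _ ≤ ENNReal.ofReal (c n * t n) + ENNReal.ofReal (c n * t n) :=
        add_le_add (hb false) (hb true)
  _ = ENNReal.ofReal (2 * c n * t n) := by
      rw [← ENNReal.ofReal_add (by nlinarith [c_pos n, t_pos n]) (by nlinarith [c_pos n, t_pos n])]
      ring_nf
  
lemma S_eq_zero {n : ℕ} {I : Set ℝ} (hd : ∀ j s, P (n, j, s) ∉ I) : S n I = 0 := by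
  rw [S]
  convert tsum_zero with js
  exact if_neg (hd js.1 js.2)

lemma S_ne_zero {n : ℕ} {I : Set ℝ} (hS : S n I ≠ 0) : ∃ j s, P (n, j, s) ∈ I := by
  by_contra hc
  push_neg at hc
  exact hS (S_eq_zero hc)

lemma exists_rho (n : ℕ) (x : ℝ) (hx : ∀ j s, P (n, j, s) ≠ x) (hqn : q n ≠ x) :
    ∃ ρ > 0, ∀ j s, ρ ≤ |P (n, j, s) - x| := by
  set D := |q n - x| with hD
  have hDpos : 0 < D := abs_pos.2 (sub_ne_zero.2 hqn)
  obtain ⟨K, hK⟩ : ∃ K : ℕ, a n K ≤ D / 2 := by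
    obtain ⟨k, hk⟩ := exists_nat_gt (t n / (D / 2))
    refine ⟨k, ?_⟩
    rw [a, div_le_iff₀ (by positivity)]
    rw [div_lt_iff₀ (by positivity)] at hk
    nlinarith
  set F : Finset ℝ := insert (D / 2)
      ((Finset.range K ×ˢ (Finset.univ : Finset Bool)).image
        (fun js => |P (n, js.1, js.2) - x|)) with hF
  have hFne : F.Nonempty := ⟨D / 2, Finset.mem_insert_self _ _⟩
  refine ⟨F.min' hFne, ?_, ?_⟩
  · rw [gt_iff_lt, Finset.lt_min'_iff]
    intro y hy
    rw [hF, Finset.mem_insert] at hy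
    rcases hy with rfl | hy
    · positivity
    · obtain ⟨js, -, rfl⟩ := Finset.mem_image.1 hy
      exact abs_pos.2 (sub_ne_zero.2 (hx js.1 js.2))
  · intro j s
    rcases lt_or_ge j K with hj | hj
    · apply Finset.min'_le
      rw [hF, Finset.mem_insert]
      right
      exact Finset.mem_image.2 ⟨(j, s), by simp [Finset.mem_range.2 hj], rfl⟩
    · have h1 : F.min' hFne ≤ D / 2 := Finset.min'_le _ _ (Finset.mem_insert_self _ _)
      have h2 : a n j ≤ D / 2 := (a_antitone n hj).trans hK
      have h3 : |P (n, j, s) - q n| = a n j := P_dist (n, j, s)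
      have h4 : D ≤ |P (n, j, s) - x| + |P (n, j, s) - q n| := by
        rw [hD]
        have := abs_sub_abs_le_abs_sub (q n - x) (P (n, j, s) - x)
        calc |q n - x| ≤ |q n - P (n, j, s)| + |P (n, j, s) - x| := by
              have := abs_sub_le (q n) (P (n, j, s)) x
              linarith [this]
        _ = |P (n, j, s) - x| + |P (n, j, s) - q n| := by rw [abs_sub_comm]; ring
      linarith [h4, h2, h3 ▸ h2]

lemma rest_bound (m : ℕ) {ε : ℝ} (hε : 0 < ε) :
    ∃ δ > 0, ∀ h : ℝ, 0 < h → h ≤ δ → ∀ I : Set ℝ, I ⊆ Metric.closedBall (q m) h →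
      (∑' n, if n = m then 0 else S n I) ≤ ENNReal.ofReal (ε * h) := by
  obtain ⟨N0, hN0⟩ := exists_pow_lt_of_lt_one (show (0:ℝ) < ε / 4 by linarith)
      (show (2⁻¹ : ℝ) < 1 by norm_num)
  set N := max N0 m with hN
  have hmN : m ≤ N := le_max_right _ _
  have hNtail : 4 * (2⁻¹ : ℝ) ^ N ≤ ε := by
    have h1 : (2⁻¹ : ℝ) ^ N ≤ (2⁻¹ : ℝ) ^ N0 :=
      pow_le_pow_of_le_one (by norm_num) (by norm_num) (le_max_left _ _)
    nlinarith
  obtain ⟨r, hr⟩ := q_rat m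
  have hρ : ∀ n, ∃ ρ > 0, n ≠ m → ∀ j s, ρ ≤ |P (n, j, s) - q m| := by
    intro n
    rcases eq_or_ne n m with rfl | hne
    · exact ⟨1, one_pos, fun hc => absurd rfl hc⟩
    · obtain ⟨ρ, hρ1, hρ2⟩ := exists_rho n (q m)
        (fun j s => hr ▸ P_ne_rat (n, j, s) r)
        (fun hc => hne (q_injective hc))
      exact ⟨ρ, hρ1, fun _ => hρ2⟩
  choose ρ hρpos hρspec using hρ
  set F : Finset ℝ := insert 1 ((Finset.range (N + 1)).image ρ) with hF
  have hFne : F.Nonempty := ⟨1, Finset.mem_insert_self _ _⟩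
  set M := F.min' hFne with hM
  have hMpos : 0 < M := by
    rw [hM, Finset.lt_min'_iff]
    intro y hy
    rw [hF, Finset.mem_insert] at hy
    rcases hy with rfl | hy
    · norm_num
    · obtain ⟨n, -, rfl⟩ := Finset.mem_image.1 hy
      exact hρpos n
  refine ⟨M / 2, by linarith, ?_⟩
  intro h hh hhδ I hI
  have hterm : ∀ n, (if n = m then 0 else S n I)
      ≤ (if n ≤ N then 0 else ENNReal.ofReal (2 * h * ((4:ℝ)⁻¹ ^ n))) := by
    intro n
    rcases eq_or_ne n m with rfl | hne
    · simp [hmN]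
    · rw [if_neg hne]
      rcases le_or_gt n N with hn | hn
      · rw [if_pos hn]
        rcases eq_or_ne (S n I) 0 with h0 | h0
        · exact h0.le
        · exfalso
          obtain ⟨j, s, hjs⟩ := S_ne_zero h0
          have h1 : ρ n ≤ |P (n, j, s) - q m| := hρspec n hne j s
          have h2 : |P (n, j, s) - q m| ≤ h := by
            have := hI hjs
            rwa [Metric.mem_closedBall, Real.dist_eq] at this
          have h3 : M ≤ ρ n := by
            apply Finset.min'_le
            rw [hF, Finset.mem_insert]
            right
            exact Finset.mem_image.2 ⟨n, Finset.mem_range.2 (by omega), rfl⟩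
          linarith
      · rw [if_neg (not_le.2 hn)]
        rcases eq_or_ne (S n I) 0 with h0 | h0
        · rw [h0]; exact zero_le
        · obtain ⟨j, s, hjs⟩ := S_ne_zero h0
          have hmn : m < n := lt_of_le_of_lt hmN hn
          have h2 : |P (n, j, s) - q m| ≤ h := by
            have := hI hjs
            rwa [Metric.mem_closedBall, Real.dist_eq] at this
          have h3 : |q n - q m| ≤ t n + h := by
            have h4 : |q n - q m| ≤ |q n - P (n, j, s)| + |P (n, j, s) - q m| := by
              have := abs_sub_le (q n) (P (n, j, s)) (q m)
              linarith
            have h5 : |q n - P (n, j, s)| = a n j := by rw [abs_sub_comm]; exact P_dist (n, j, s)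
            have h6 : a n j ≤ t n := a_le_t n j
            linarith
          have h7 : 2 * t n ≤ |q n - q m| := t_sep hmn
          have h8 : |q n - q m| ≤ 2 * h := by linarith
          calc S n I ≤ ENNReal.ofReal (2 * c n * t n) := S_le_mass n I
          _ ≤ ENNReal.ofReal (2 * h * ((4:ℝ)⁻¹ ^ n)) := by
              apply ENNReal.ofReal_le_ofReal
              have := t_mass_sep hmn
              have h9 : (0:ℝ) < (4:ℝ)⁻¹ ^ n := by positivity
              nlinarith
  calc (∑' n, if n = m then 0 else S n I)
      ≤ ∑' n, (if n ≤ N then 0 else ENNReal.ofReal (2 * h * ((4:ℝ)⁻¹ ^ n))) :=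
        ENNReal.tsum_le_tsum hterm
  _ ≤ ∑' n, ENNReal.ofReal ((2 * h * (2⁻¹:ℝ) ^ N) * (2⁻¹:ℝ) ^ n) := by
      apply ENNReal.tsum_le_tsum
      intro n
      rcases le_or_gt n N with hn | hn
      · rw [if_pos hn]; exact zero_le
      · rw [if_neg (not_le.2 hn)]
        apply ENNReal.ofReal_le_ofReal
        have h1 : ((4:ℝ)⁻¹ ^ n) = (2⁻¹:ℝ) ^ n * (2⁻¹:ℝ) ^ n := by
          rw [← mul_pow]; norm_num
        have h2 : (2⁻¹:ℝ) ^ n ≤ (2⁻¹:ℝ) ^ N :=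
          pow_le_pow_of_le_one (by norm_num) (by norm_num) hn.le
        have h3 : (0:ℝ) < (2⁻¹:ℝ) ^ n := by positivity
        rw [h1]
        have h4 := mul_le_mul_of_nonneg_right
          (mul_le_mul_of_nonneg_left h2 (by linarith : (0:ℝ) ≤ 2 * h)) h3.le
        nlinarith [h4]
  _ = ENNReal.ofReal (∑' n : ℕ, (2 * h * (2⁻¹:ℝ) ^ N) * (2⁻¹:ℝ) ^ n) := by
      rw [ENNReal.ofReal_tsum_of_nonneg]
      · intro n; positivity
      · exact (summable_geometric_of_lt_one (by norm_num) (by norm_num)).mul_left _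
  _ ≤ ENNReal.ofReal (ε * h) := by
      apply ENNReal.ofReal_le_ofReal
      rw [tsum_mul_left, tsum_geometric_of_lt_one (by norm_num) (by norm_num)]
      have : (1 - (2⁻¹:ℝ))⁻¹ = 2 := by norm_num
      rw [this]
      nlinarith [pow_pos (show (0:ℝ) < 2⁻¹ by norm_num) N]

lemma μ_univ_lt_top : μ Set.univ < ⊤ := by
  have h1 : μ Set.univ = ∑' n, S n Set.univ := μ_eq_tsum_S _
  have h2 : (∑' n, S n Set.univ) ≤ ∑' n : ℕ, ENNReal.ofReal ((2⁻¹:ℝ) ^ n) := by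
    apply ENNReal.tsum_le_tsum
    intro n
    calc S n Set.univ ≤ ENNReal.ofReal (2 * c n * t n) := S_le_mass n _
    _ ≤ ENNReal.ofReal ((2⁻¹:ℝ) ^ n) := ENNReal.ofReal_le_ofReal (t_mass n)
  have h3 : (∑' n : ℕ, ENNReal.ofReal ((2⁻¹:ℝ) ^ n)) = ENNReal.ofReal 2 := by
    rw [← ENNReal.ofReal_tsum_of_nonneg (fun n => by positivity)
      (summable_geometric_of_lt_one (by norm_num) (by norm_num))]
    congr 1
    rw [tsum_geometric_of_lt_one (by norm_num) (by norm_num)]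
    norm_num
  rw [h1]
  exact lt_of_le_of_lt (h2.trans h3.le) ENNReal.ofReal_lt_top

instance : IsFiniteMeasure μ := ⟨μ_univ_lt_top⟩

lemma μ_pos_of_mem {p : ℕ × ℕ × Bool} {s : Set ℝ} (hp : P p ∈ s) :
    0 < μ s := by
  have h1 : (ENNReal.ofReal (w p) • Measure.dirac (P p)) s ≤ μ s :=
    Measure.le_sum _ p s
  rw [Measure.smul_apply, Measure.dirac_apply_of_mem hp, smul_eq_mul, mul_one] at h1
  exact lt_of_lt_of_le (ENNReal.ofReal_pos.2 (w_pos p)) h1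

instance : NeZero μ := by
  constructor
  intro hc
  have := μ_pos_of_mem (p := (0, 0, true)) (s := Set.univ) (Set.mem_univ _)
  rw [hc] at this
  simp at this

lemma μ_singular : μ ⟂ₘ (volume : Measure ℝ) := by
  refine ⟨(Set.range P)ᶜ, (Set.countable_range P).measurableSet.compl, ?_, ?_⟩
  · rw [μ_apply]
    convert tsum_zero with p
    rw [if_neg]
    intro hc
    exact hc (Set.mem_range_self p)
  · rw [compl_compl]
    exact (Set.countable_range P).measure_zero _

lemma F_diff {x y : ℝ} (hxy : x ≤ y) :
    (μ (Iic y)).toReal - (μ (Iic x)).toReal = (μ (Ioc x y)).toReal := by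
  have h1 : μ (Iic y) = μ (Iic x) + μ (Ioc x y) := by
    rw [← measure_union (Iic_disjoint_Ioc le_rfl) measurableSet_Ioc,
      Iic_union_Ioc_eq_Iic hxy]
  rw [h1, ENNReal.toReal_add (measure_ne_top μ _) (measure_ne_top μ _)]
  ring

lemma F_strictMono : StrictMono (fun x => (μ (Iic x)).toReal) := by
  intro x y hxy
  simp only []
  have h1 : (μ (Iic y)).toReal - (μ (Iic x)).toReal = (μ (Ioc x y)).toReal := F_diff hxy.le
  have h2 : 0 < (μ (Ioc x y)).toReal := by
    obtain ⟨r, hr1, hr2⟩ := exists_rat_btwn hxy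
    obtain ⟨n, hn⟩ := q_surjective r
    obtain ⟨j, hj⟩ : ∃ j : ℕ, a n j < y - q n := by
      have hy : 0 < y - q n := by rw [hn]; linarith
      obtain ⟨k, hk⟩ := exists_nat_gt (t n / (y - q n))
      refine ⟨k, ?_⟩
      rw [a, div_lt_iff₀ (by positivity)]
      rw [div_lt_iff₀ hy] at hk
      nlinarith
    have hmem : P (n, j, true) ∈ Ioc x y := by
      rw [P]
      simp only [cond, one_mul]
      constructor
      · have := a_pos n j
        rw [hn]
        nlinarith
      · linarith [hj]
    refine ENNReal.toReal_pos (μ_pos_of_mem hmem).ne' (measure_ne_top μ _)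
  linarith

lemma hasDerivAt_F (m : ℕ) : HasDerivAt (fun x => (μ (Iic x)).toReal) (c m) (q m) := by
  rw [hasDerivAt_iff_isLittleO, Asymptotics.isLittleO_iff]
  intro ε hε
  obtain ⟨δ₁, hδ₁pos, hδ₁⟩ := rest_bound m (show (0:ℝ) < ε / 2 by linarith)
  set x := q m
  set tm := t m with htm
  set cm := c m with hcm
  have htmpos : 0 < tm := t_pos m
  have hcmpos : 0 < cm := c_pos m
  set δ : ℝ := min δ₁ (min (tm / 2) (ε * tm / (4 * cm))) with hδ
  have hδpos : 0 < δ := by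
    apply lt_min hδ₁pos
    apply lt_min (by linarith)
    positivity
  have core : ∀ h : ℝ, 0 < h → h < δ → ∀ I : Set ℝ, I ⊆ Metric.closedBall x h →
      (∃ u, 0 ≤ u ∧ u ≤ h ∧ h - u ≤ h * h / (tm - h) ∧ S m I = ENNReal.ofReal (cm * u)) →
      |(μ I).toReal - cm * h| ≤ ε * h := by
    intro h hh hhδ I hI hu
    obtain ⟨u, hu0, huh, huerr, huS⟩ := hu
    have hhtm : h < tm / 2 := lt_of_lt_of_le hhδ ((min_le_right _ _).trans (min_le_left _ _))
    have hhε : h ≤ ε * tm / (4 * cm) :=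
      le_of_lt (lt_of_lt_of_le hhδ ((min_le_right _ _).trans (min_le_right _ _)))
    have hrest := hδ₁ h hh (le_of_lt (lt_of_lt_of_le hhδ (min_le_left _ _))) I hI
    have hsplit : μ I = S m I + ∑' n, (if n = m then 0 else S n I) := by
      rw [μ_eq_tsum_S, ENNReal.tsum_eq_add_tsum_ite m]
      congr 1
      apply tsum_congr
      intro n
      congr
    set R := ∑' n, (if n = m then 0 else S n I) with hR
    have hRtop : R ≠ ⊤ := (lt_of_le_of_lt hrest ENNReal.ofReal_lt_top).ne
    have htoReal : (μ I).toReal = cm * u + R.toReal := by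
      rw [hsplit, huS, ENNReal.toReal_add ENNReal.ofReal_ne_top hRtop,
        ENNReal.toReal_ofReal (by positivity)]
    have hR0 : 0 ≤ R.toReal := ENNReal.toReal_nonneg
    have hRle : R.toReal ≤ ε / 2 * h := by
      apply ENNReal.toReal_le_of_le_ofReal (by positivity) hrest
    have herr : cm * (h - u) ≤ ε / 2 * h := by
      have e1 : h * h / (tm - h) ≤ h * h / (tm / 2) := by
        apply div_le_div_of_nonneg_left (by positivity) (by linarith) (by linarith)
      have e2 : h * h / (tm / 2) = 2 * h * h / tm := by field_simp
      have e3 : h - u ≤ 2 * h * h / tm := by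
        rw [← e2]
        exact huerr.trans e1
      have e4 : cm * (2 * h * h / tm) ≤ ε / 2 * h := by
        rw [le_div_iff₀ (show (0:ℝ) < 4 * cm by positivity)] at hhε
        rw [mul_comm, div_mul_eq_mul_div, div_le_iff₀ htmpos]
        nlinarith [mul_le_mul_of_nonneg_left hhε hh.le]
      calc cm * (h - u) ≤ cm * (2 * h * h / tm) := by nlinarith
      _ ≤ ε / 2 * h := e4
    rw [htoReal]
    have habs : |cm * u + R.toReal - cm * h| ≤ cm * (h - u) + R.toReal := by
      rw [abs_le]
      constructor <;> nlinarith
    calc |cm * u + R.toReal - cm * h| ≤ cm * (h - u) + R.toReal := habs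
    _ ≤ ε / 2 * h + ε / 2 * h := add_le_add herr hRle
    _ = ε * h := by ring
  rw [Metric.eventually_nhds_iff]
  refine ⟨δ, hδpos, ?_⟩
  intro y hy
  rw [Real.dist_eq] at hy
  rcases lt_trichotomy y x with hlt | heq | hgt
  · set h := x - y with hh'
    have hh : 0 < h := by linarith
    have hhδ : h < δ := by
      rw [abs_sub_comm] at hy
      rwa [abs_of_pos hh] at hy
    have h1 : (μ (Iic x)).toReal - (μ (Iic y)).toReal = (μ (Ioc y x)).toReal :=
      F_diff hlt.le
    have h2 : Ioc y x = Ioc (x - h) x := by rw [hh']; ring_nf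
    have h3 : Ioc (x - h) x ⊆ Metric.closedBall x h := by
      intro z hz
      rw [Metric.mem_closedBall, Real.dist_eq, abs_le]
      constructor <;> [linarith [hz.1]; linarith [hz.2]]
    have hhtm : h < tm := by
      have : h < tm / 2 := lt_of_lt_of_le hhδ ((min_le_right _ _).trans (min_le_left _ _))
      linarith
    have h4 := core h hh hhδ (Ioc (x - h) x) h3 (S_left m hh hhtm)
    rw [← h2] at h4
    have h5 : (fun x' => (μ (Iic x')).toReal) y - (μ (Iic x)).toReal - (y - x) • cm
        = -((μ (Ioc y x)).toReal - cm * h) := by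
      simp only [smul_eq_mul]
      rw [← h1, hh']
      ring
    calc ‖(fun x' => (μ (Iic x')).toReal) y - (μ (Iic x)).toReal - (y - x) • cm‖
        = |(μ (Ioc y x)).toReal - cm * h| := by rw [h5, Real.norm_eq_abs, abs_neg]
    _ ≤ ε * h := h4
    _ = ε * ‖y - x‖ := by rw [Real.norm_eq_abs, abs_sub_comm, abs_of_pos hh]
  · subst heq
    simp
  · set h := y - x with hh'
    have hh : 0 < h := by linarith
    have hhδ : h < δ := by rwa [abs_of_pos hh] at hy
    have h1 : (μ (Iic y)).toReal - (μ (Iic x)).toReal = (μ (Ioc x y)).toReal :=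
      F_diff hgt.le
    have h2 : Ioc x y = Ioc x (x + h) := by rw [hh']; ring_nf
    have h3 : Ioc x (x + h) ⊆ Metric.closedBall x h := by
      intro z hz
      rw [Metric.mem_closedBall, Real.dist_eq, abs_le]
      constructor <;> [linarith [hz.1]; linarith [hz.2]]
    have hhtm : h < tm := by
      have : h < tm / 2 := lt_of_lt_of_le hhδ ((min_le_right _ _).trans (min_le_left _ _))
      linarith
    have h4 := core h hh hhδ (Ioc x (x + h)) h3 (S_right m hh hhtm)
    rw [← h2] at h4
    have h5 : (fun x' => (μ (Iic x')).toReal) y - (μ (Iic x)).toReal - (y - x) • cm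
        = (μ (Ioc x y)).toReal - cm * h := by
      simp only [smul_eq_mul]
      rw [← h1, hh']
      ring
    calc ‖(fun x' => (μ (Iic x')).toReal) y - (μ (Iic x)).toReal - (y - x) • cm‖
        = |(μ (Ioc x y)).toReal - cm * h| := by rw [h5, Real.norm_eq_abs]
    _ ≤ ε * h := h4
    _ = ε * ‖y - x‖ := by rw [Real.norm_eq_abs, abs_of_pos hh]

noncomputable def ν : Measure ℝ := (μ Set.univ)⁻¹ • μ

instance : IsProbabilityMeasure ν := by
  rw [ν]
  infer_instance

lemma C_pos : 0 < (μ Set.univ).toReal :=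
  ENNReal.toReal_pos (Measure.measure_univ_ne_zero.2 (NeZero.ne μ)) (measure_ne_top μ _)

lemma F_eq_cdf (x : ℝ) :
    (μ (Iic x)).toReal = (μ Set.univ).toReal * ProbabilityTheory.cdf ν x := by
  rw [ProbabilityTheory.cdf_eq_real, measureReal_def, ν, Measure.smul_apply, smul_eq_mul,
    ENNReal.toReal_mul, ENNReal.toReal_inv]
  rw [← mul_assoc, mul_inv_cancel₀ C_pos.ne', one_mul]

lemma ae_deriv : ∀ᵐ x ∂(volume : Measure ℝ),
    HasDerivAt (fun y => (μ (Iic y)).toReal) 0 x := by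
  have h2 : (ProbabilityTheory.cdf ν).measure = ν := ProbabilityTheory.measure_cdf ν
  have h3 : ν ⟂ₘ (volume : Measure ℝ) := μ_singular.smul _
  have h4 : ν.rnDeriv volume =ᵐ[volume] 0 := h3.rnDeriv_ae_eq_zero
  filter_upwards [(ProbabilityTheory.cdf ν).ae_hasDerivAt, h4] with x hx hx0
  rw [h2, hx0] at hx
  norm_num at hx
  have h5 : HasDerivAt (fun y => (μ Set.univ).toReal * ProbabilityTheory.cdf ν y)
      ((μ Set.univ).toReal * 0) x := hx.const_mul _
  rw [mul_zero] at h5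
  have h6 : (fun y => (μ (Iic y)).toReal) = fun y => (μ Set.univ).toReal * ProbabilityTheory.cdf ν y :=
    funext F_eq_cdf
  rw [h6]
  exact h5

end Stmt8

open Stmt8 in
theorem stmt8 :
    ∃ f : ℝ → ℝ, StrictMono f ∧ (∀ q : ℚ, HasDerivAt f ((2 : ℝ) ^ (q : ℝ)) (q : ℝ)) ∧
      ∀ᵐ x : ℝ ∂MeasureTheory.volume, Irrational x → HasDerivAt f 0 x := by
  refine ⟨fun x => (μ (Set.Iic x)).toReal, F_strictMono, ?_, ?_⟩
  · intro r
    obtain ⟨n, hn⟩ := q_surjective r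
    have h1 := hasDerivAt_F n
    have hc : c n = (2 : ℝ) ^ ((r : ℝ)) := by rw [c, hn]
    rw [hn, hc] at h1
    exact h1
  · filter_upwards [ae_deriv] with x hx _
    exact hx
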